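/- Let H be a real separable Hilbert space, K ⊆ H a compact subset, F : K → H a continuous map, and ε > 0. Then there exist a finite index set, vectors v_i ∈ H, and real-valued functions f_i : K → ℝ, each a finite real linear combination of finite products of functions of the form x ↦ ⟪w, x⟫ with w ∈ H, such that for every x ∈ K, ‖F(x) − Σ_i f_i(x) • v_i‖ < ε. -/
import Mathlib


open RealInnerProductSpace

/-- Prenter's Stone–Weierstrass theorem for real separable Hilbert spaces (Theorem 1 of the
paper): a continuous map `F : K → H` on a compact set `K ⊆ H` can be uniformly approximated
within `ε` by an `H`-valued polynomial `x ↦ ∑ i, f i x • v i`, where each scalar coefficient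
function `f i` is a finite real linear combination of finite products of inner-product
functionals `x ↦ ⟪w, x⟫`. -/
theorem hilbert_valued_stone_weierstrass
    (H : Type*) [NormedAddCommGroup H] [InnerProductSpace ℝ H] [CompleteSpace H]
    [TopologicalSpace.SeparableSpace H]
    (K : Set H) (hK : IsCompact K)
    (F : K → H) (hF : Continuous F) (ε : ℝ) (hε : 0 < ε) :
    ∃ (N : ℕ) (v : Fin N → H) (f : Fin N → (K → ℝ)),
      (∀ i, f i ∈ Algebra.adjoin ℝ {g : K → ℝ | ∃ w : H, ∀ x : K, g x = ⟪w, (x : H)⟫}) ∧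
      ∀ x : K, ‖F x - ∑ i, f i x • v i‖ < ε := by
  classical
  by_cases hne : Nonempty K
  · haveI : CompactSpace K := isCompact_iff_compactSpace.mp hK
    -- a finite ε/3-net of the range of F
    obtain ⟨t, htfin, htcover⟩ :=
      Metric.totallyBounded_iff.mp (isCompact_range hF).totallyBounded (ε / 3) (by positivity)
    set s : Finset H := htfin.toFinset with hs
    set N : ℕ := s.card with hN
    let e : s ≃ Fin N := s.equivFin
    let v : Fin N → H := fun i => ((e.symm i : s) : H)
    -- bump functions and partition of unity
    let ψ : Fin N → K → ℝ := fun j x => max (ε / 3 - ‖F x - v j‖) 0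
    have hψcont : ∀ j, Continuous (ψ j) := fun j =>
      (continuous_const.sub ((hF.sub continuous_const).norm)).max continuous_const
    have hψ0 : ∀ j x, 0 ≤ ψ j x := fun j x => le_max_right _ _
    let S : K → ℝ := fun x => ∑ j, ψ j x
    have hS : ∀ x, 0 < S x := by
      intro x
      have hx : F x ∈ ⋃ y ∈ t, Metric.ball y (ε / 3) := htcover ⟨x, rfl⟩
      simp only [Set.mem_iUnion] at hx
      obtain ⟨y, hy, hxy⟩ := hx
      have hyt : y ∈ s := htfin.mem_toFinset.mpr hy
      refine Finset.sum_pos' (fun j _ => hψ0 j x) ⟨e ⟨y, hyt⟩, Finset.mem_univ _, ?_⟩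
      have hvy : v (e ⟨y, hyt⟩) = y := by simp [v]
      rw [Metric.mem_ball, dist_eq_norm] at hxy
      show 0 < max (ε / 3 - ‖F x - v (e ⟨y, hyt⟩)‖) 0
      rw [hvy]
      exact lt_max_iff.mpr (Or.inl (by linarith))
    let φ : Fin N → K → ℝ := fun j x => ψ j x / S x
    have hScont : Continuous S := continuous_finset_sum _ fun j _ => hψcont j
    have hφcont : ∀ j, Continuous (φ j) := fun j =>
      (hψcont j).div hScont fun x => (hS x).ne'
    have hφ0 : ∀ j x, 0 ≤ φ j x := fun j x => div_nonneg (hψ0 j x) (hS x).le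
    have hφsum : ∀ x, ∑ j, φ j x = 1 := by
      intro x
      show (∑ j, ψ j x / S x) = 1
      rw [← Finset.sum_div]
      exact div_self (hS x).ne'
    have hkey : ∀ x j, φ j x * ‖F x - v j‖ ≤ φ j x * (ε / 3) := by
      intro x j
      rcases eq_or_lt_of_le (hψ0 j x) with h | h
      · have hz : φ j x = 0 := by
          show ψ j x / S x = 0
          rw [← h, zero_div]
        simp [hz]
      · have hlt : ‖F x - v j‖ < ε / 3 := by
          by_contra hcon
          push_neg at hcon
          have hz : ψ j x = 0 := max_eq_right (by linarith)
          rw [hz] at h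
          exact lt_irrefl 0 h
        exact mul_le_mul_of_nonneg_left hlt.le (hφ0 j x)
    have hmain : ∀ x : K, ‖F x - ∑ j, φ j x • v j‖ ≤ ε / 3 := by
      intro x
      have h1 : F x - ∑ j, φ j x • v j = ∑ j, φ j x • (F x - v j) := by
        simp only [smul_sub, Finset.sum_sub_distrib, ← Finset.sum_smul, hφsum x, one_smul]
      rw [h1]
      calc ‖∑ j, φ j x • (F x - v j)‖ ≤ ∑ j, ‖φ j x • (F x - v j)‖ := norm_sum_le _ _
        _ = ∑ j, φ j x * ‖F x - v j‖ := by
            refine Finset.sum_congr rfl fun j _ => ?_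
            rw [norm_smul, Real.norm_eq_abs, abs_of_nonneg (hφ0 j x)]
        _ ≤ ∑ j, φ j x * (ε / 3) := Finset.sum_le_sum fun j _ => hkey x j
        _ = (∑ j, φ j x) * (ε / 3) := by rw [Finset.sum_mul]
        _ = ε / 3 := by rw [hφsum x, one_mul]
    -- Stone–Weierstrass for the algebra generated by inner-product functionals
    set A : Subalgebra ℝ C(K, ℝ) :=
      Algebra.adjoin ℝ {g : C(K, ℝ) | ∃ w : H, ∀ x : K, g x = ⟪w, (x : H)⟫} with hA_def
    have hA : A.SeparatesPoints := by
      intro x y hxy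
      have hcont : Continuous fun z : K => ⟪(x : H) - (y : H), (z : H)⟫ :=
        continuous_const.inner continuous_subtype_val
      refine ⟨fun z : K => ⟪(x : H) - (y : H), (z : H)⟫,
        ⟨⟨fun z : K => ⟪(x : H) - (y : H), (z : H)⟫, hcont⟩,
          Algebra.subset_adjoin ⟨(x : H) - (y : H), fun z => rfl⟩, rfl⟩, ?_⟩
      have hne' : (x : H) - (y : H) ≠ 0 := sub_ne_zero.mpr (Subtype.coe_injective.ne hxy)
      intro hcontra
      apply hne'
      have hc : ⟪(x : H) - (y : H), (x : H)⟫ = ⟪(x : H) - (y : H), (y : H)⟫ := hcontra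
      have h0 : ⟪(x : H) - (y : H), (x : H) - (y : H)⟫ = (0 : ℝ) := by
        rw [inner_sub_right, hc, sub_self]
      exact inner_self_eq_zero.mp h0
    set C : ℝ := ∑ j, ‖v j‖ with hC
    have hC0 : 0 ≤ C := Finset.sum_nonneg fun j _ => norm_nonneg _
    set δ : ℝ := ε / 3 / (C + 1) with hδ
    have hδ0 : 0 < δ := by positivity
    have happrox : ∀ j : Fin N, ∃ g : A, ∀ x, ‖(g : K → ℝ) x - φ j x‖ < δ := fun j =>
      ContinuousMap.exists_mem_subalgebra_near_continuous_of_separatesPoints A hA (φ j)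
        (hφcont j) δ hδ0
    choose g hg using happrox
    refine ⟨N, v, fun j => ((g j : C(K, ℝ)) : K → ℝ), ?_, ?_⟩
    · intro j
      have hmem : ((g j : C(K, ℝ)) : K → ℝ) ∈
          (Algebra.adjoin ℝ {gc : C(K, ℝ) | ∃ w : H, ∀ x : K, gc x = ⟪w, (x : H)⟫}).map
            (ContinuousMap.coeFnAlgHom ℝ) :=
        ⟨(g j : C(K, ℝ)), (g j).2, rfl⟩
      rw [AlgHom.map_adjoin] at hmem
      refine Algebra.adjoin_mono ?_ hmem
      rintro _ ⟨gc, ⟨w, hw⟩, rfl⟩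
      exact ⟨w, fun x => hw x⟩
    · intro x
      have h2 : F x - ∑ j, ((g j : C(K, ℝ)) : K → ℝ) x • v j
          = (F x - ∑ j, φ j x • v j)
            + ∑ j, (φ j x - ((g j : C(K, ℝ)) : K → ℝ) x) • v j := by
        simp only [sub_smul, Finset.sum_sub_distrib]
        abel
      rw [h2]
      have h3 : ‖∑ j, (φ j x - ((g j : C(K, ℝ)) : K → ℝ) x) • v j‖ ≤ δ * C := by
        calc ‖∑ j, (φ j x - ((g j : C(K, ℝ)) : K → ℝ) x) • v j‖
            ≤ ∑ j, ‖(φ j x - ((g j : C(K, ℝ)) : K → ℝ) x) • v j‖ := norm_sum_le _ _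
          _ ≤ ∑ j, δ * ‖v j‖ := by
              refine Finset.sum_le_sum fun j _ => ?_
              rw [norm_smul]
              refine mul_le_mul_of_nonneg_right ?_ (norm_nonneg _)
              rw [Real.norm_eq_abs, abs_sub_comm]
              exact le_of_lt (by simpa [Real.norm_eq_abs] using hg j x)
          _ = δ * C := by rw [← Finset.mul_sum]
      have h4 : δ * C < ε / 3 := by
        rw [hδ, div_mul_eq_mul_div, div_lt_iff₀ (by positivity)]
        nlinarith
      calc ‖(F x - ∑ j, φ j x • v j)
            + ∑ j, (φ j x - ((g j : C(K, ℝ)) : K → ℝ) x) • v j‖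
          ≤ ‖F x - ∑ j, φ j x • v j‖
            + ‖∑ j, (φ j x - ((g j : C(K, ℝ)) : K → ℝ) x) • v j‖ := norm_add_le _ _
        _ ≤ ε / 3 + δ * C := add_le_add (hmain x) h3
        _ < ε / 3 + ε / 3 := by linarith
        _ < ε := by linarith
  · exact ⟨0, Fin.elim0, fun i => i.elim0, fun i => i.elim0, fun x => absurd ⟨x⟩ hne⟩
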